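/- With notation as in the context: in the ring R_U, the images under φ_U of the four monomials y⁴, x²z², y²z², z⁴ all coincide; moreover, the ℤ-submodule of R_U generated by the images of the six total-degree-4 monomials with all exponents even (x⁴, x²y², x²z², y⁴, y²z², z⁴) is a free ℤ-module of rank 3 with basis the images of x⁴, x²y², x²z². -/

import Mathlib

noncomputable section

open MvPolynomial

/-- The polynomial ring `ℤ[x,y,z]` (also used, with variables renamed, for the three
blowup charts `ℤ[x,u,v]`, `ℤ[y,s,w]`, `ℤ[z,p,q]`). -/
abbrev P3 : Type := MvPolynomial (Fin 3) ℤ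

/-- The first generator `x³z − xy²z` of the ideal `I ⊆ ℤ[x,y,z]`. -/
def g1 : P3 := X 0 ^ 3 * X 2 - X 0 * X 1 ^ 2 * X 2

/-- The second generator `xy³ − xyz²` of the ideal `I ⊆ ℤ[x,y,z]`. -/
def g2 : P3 := X 0 * X 1 ^ 3 - X 0 * X 1 * X 2 ^ 2

/-- The third generator `yz³ − x²yz` of the ideal `I ⊆ ℤ[x,y,z]`. -/
def g3 : P3 := X 1 * X 2 ^ 3 - X 0 ^ 2 * X 1 * X 2

/-- The chart map `φ_U : ℤ[x,y,z] → ℤ[x,u,v]`, `x ↦ x`, `y ↦ x·u`, `z ↦ x·v`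
(in the target, `x = X 0`, `u = X 1`, `v = X 2`). -/
def phiU : P3 →+* P3 := (aeval ![X 0, X 0 * X 1, X 0 * X 2]).toRingHom

/-- The chart map `φ_V : ℤ[x,y,z] → ℤ[y,s,w]`, `x ↦ y·s`, `y ↦ y`, `z ↦ y·w`
(in the target, `y = X 0`, `s = X 1`, `w = X 2`). -/
def phiV : P3 →+* P3 := (aeval ![X 0 * X 1, X 0, X 0 * X 2]).toRingHom

/-- The chart map `φ_W : ℤ[x,y,z] → ℤ[z,p,q]`, `x ↦ z·p`, `y ↦ z·q`, `z ↦ z`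
(in the target, `z = X 0`, `p = X 1`, `q = X 2`). -/
def phiW : P3 →+* P3 := (aeval ![X 0 * X 1, X 0 * X 2, X 0]).toRingHom

/-- The ideal `I_U = (x⁴v(1−u²), x⁴u(u²−v²), x⁴uv(v²−1))` of `ℤ[x,u,v]`, generated by the
`φ_U`-images of the generators of `I`, so that `R_U = ℤ[x,u,v]/I_U`. -/
def IU : Ideal P3 := Ideal.span {phiU g1, phiU g2, phiU g3}

/-- The ideal `I_V = (y⁴sw(s²−1), y⁴s(1−w²), y⁴w(w²−s²))` of `ℤ[y,s,w]`, generated by the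
`φ_V`-images of the generators of `I`, so that `R_V = ℤ[y,s,w]/I_V`. -/
def IV : Ideal P3 := Ideal.span {phiV g1, phiV g2, phiV g3}

/-- The ideal `I_W = (z⁴p(p²−q²), z⁴pq(q²−1), z⁴q(1−p²))` of `ℤ[z,p,q]`, generated by the
`φ_W`-images of the generators of `I`, so that `R_W = ℤ[z,p,q]/I_W`. -/
def IW : Ideal P3 := Ideal.span {phiW g1, phiW g2, phiW g3}

/-- Auxiliary evaluation `ℤ[x,u,v] → ℤ[t]`, `x ↦ 1`, `u ↦ t`, `v ↦ 0`. -/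
def psiU : P3 →+* Polynomial ℤ := (aeval ![1, Polynomial.X, 0]).toRingHom

/-- Auxiliary evaluation `ℤ[x,u,v] → ℤ` at `(1,1,1)`. -/
def evU : P3 →+* ℤ := (aeval ![1, 1, 1]).toRingHom

lemma psiU_IU : IU ≤ Ideal.comap psiU (Ideal.span {(Polynomial.X : Polynomial ℤ) ^ 3}) := by
  rw [IU, Ideal.span_le]
  intro w hw
  simp only [Set.mem_insert_iff, Set.mem_singleton_iff] at hw
  rcases hw with rfl | rfl | rfl <;>
    simp only [SetLike.mem_coe, Ideal.mem_comap, Ideal.mem_span_singleton]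
  · exact (by simp [psiU, phiU, g1] : psiU (phiU g1) = 0) ▸ dvd_zero _
  · exact (by simp [psiU, phiU, g2] : psiU (phiU g2) = Polynomial.X ^ 3) ▸ dvd_refl _
  · exact (by simp [psiU, phiU, g3] : psiU (phiU g3) = 0) ▸ dvd_zero _

lemma evU_IU : IU ≤ RingHom.ker evU := by
  rw [IU, Ideal.span_le]
  intro w hw
  simp only [Set.mem_insert_iff, Set.mem_singleton_iff] at hw
  rcases hw with rfl | rfl | rfl <;>
    simp [RingHom.mem_ker, evU, phiU, g1, g2, g3]

lemma eq1 : Ideal.Quotient.mk IU (phiU (X 1 ^ 4)) =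
    Ideal.Quotient.mk IU (phiU (X 0 ^ 2 * X 2 ^ 2)) := by
  rw [Ideal.Quotient.eq]
  have h : phiU (X 1 ^ 4) - phiU (X 0 ^ 2 * X 2 ^ 2)
      = X 1 * phiU g2 - X 2 * phiU g1 := by
    simp [phiU, g1, g2]; ring
  rw [h]
  exact sub_mem (Ideal.mul_mem_left _ _ (Ideal.subset_span (by simp)))
    (Ideal.mul_mem_left _ _ (Ideal.subset_span (by simp)))

lemma eq2 : Ideal.Quotient.mk IU (phiU (X 0 ^ 2 * X 2 ^ 2)) =
    Ideal.Quotient.mk IU (phiU (X 1 ^ 2 * X 2 ^ 2)) := by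
  rw [Ideal.Quotient.eq]
  have h : phiU (X 0 ^ 2 * X 2 ^ 2) - phiU (X 1 ^ 2 * X 2 ^ 2)
      = X 2 * phiU g1 := by
    simp [phiU, g1]; ring
  rw [h]
  exact Ideal.mul_mem_left _ _ (Ideal.subset_span (by simp))

lemma eq3 : Ideal.Quotient.mk IU (phiU (X 1 ^ 2 * X 2 ^ 2)) =
    Ideal.Quotient.mk IU (phiU (X 2 ^ 4)) := by
  rw [Ideal.Quotient.eq]
  have h : phiU (X 1 ^ 2 * X 2 ^ 2) - phiU (X 2 ^ 4)
      = (X 1 ^ 2 * X 2 - X 2 ^ 3) * phiU g1 + (X 1 * X 2 ^ 2) * phiU g2 := by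
    simp [phiU, g1, g2]; ring
  rw [h]
  exact add_mem (Ideal.mul_mem_left _ _ (Ideal.subset_span (by simp)))
    (Ideal.mul_mem_left _ _ (Ideal.subset_span (by simp)))

/-- In `R_U = ℤ[x,u,v]/I_U`, the images under `φ_U` of the four monomials `y⁴`, `x²z²`,
`y²z²`, `z⁴` all coincide; moreover the `ℤ`-submodule of `R_U` generated by the images of
the six total-degree-4 monomials with all exponents even (`x⁴`, `x²y²`, `x²z²`, `y⁴`,
`y²z²`, `z⁴`) is a free `ℤ`-module of rank 3, with basis the images of `x⁴`, `x²y²`,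
`x²z²`. -/
theorem degree_four_even_monomials_in_RU :
    (Ideal.Quotient.mk IU (phiU (X 1 ^ 4)) =
        Ideal.Quotient.mk IU (phiU (X 0 ^ 2 * X 2 ^ 2)) ∧
      Ideal.Quotient.mk IU (phiU (X 0 ^ 2 * X 2 ^ 2)) =
        Ideal.Quotient.mk IU (phiU (X 1 ^ 2 * X 2 ^ 2)) ∧
      Ideal.Quotient.mk IU (phiU (X 1 ^ 2 * X 2 ^ 2)) =
        Ideal.Quotient.mk IU (phiU (X 2 ^ 4))) ∧
    LinearIndependent ℤ
      ![Ideal.Quotient.mk IU (phiU (X 0 ^ 4)),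
        Ideal.Quotient.mk IU (phiU (X 0 ^ 2 * X 1 ^ 2)),
        Ideal.Quotient.mk IU (phiU (X 0 ^ 2 * X 2 ^ 2))] ∧
    Submodule.span ℤ
        ({Ideal.Quotient.mk IU (phiU (X 0 ^ 4)),
          Ideal.Quotient.mk IU (phiU (X 0 ^ 2 * X 1 ^ 2)),
          Ideal.Quotient.mk IU (phiU (X 0 ^ 2 * X 2 ^ 2)),
          Ideal.Quotient.mk IU (phiU (X 1 ^ 4)),
          Ideal.Quotient.mk IU (phiU (X 1 ^ 2 * X 2 ^ 2)),
          Ideal.Quotient.mk IU (phiU (X 2 ^ 4))} : Set (P3 ⧸ IU)) =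
      Submodule.span ℤ
        ({Ideal.Quotient.mk IU (phiU (X 0 ^ 4)),
          Ideal.Quotient.mk IU (phiU (X 0 ^ 2 * X 1 ^ 2)),
          Ideal.Quotient.mk IU (phiU (X 0 ^ 2 * X 2 ^ 2))} : Set (P3 ⧸ IU)) := by
  refine ⟨⟨eq1, eq2, eq3⟩, ?_, ?_⟩
  · rw [Fintype.linearIndependent_iff]
    intro g hg
    simp only [Fin.sum_univ_three, Matrix.cons_val_zero, Matrix.cons_val_one,
      Matrix.head_cons, Matrix.cons_val_two, Matrix.tail_cons] at hg
    have hg' : Ideal.Quotient.mk IU (g 0 • phiU (X 0 ^ 4)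
        + g 1 • phiU (X 0 ^ 2 * X 1 ^ 2)
        + g 2 • phiU (X 0 ^ 2 * X 2 ^ 2)) = 0 := by
      rw [map_add, map_add, map_zsmul, map_zsmul, map_zsmul]
      exact hg
    have hmem := Ideal.Quotient.eq_zero_iff_mem.mp hg'
    have hdvd : (Polynomial.X : Polynomial ℤ) ^ 3 ∣ psiU (g 0 • phiU (X 0 ^ 4)
        + g 1 • phiU (X 0 ^ 2 * X 1 ^ 2)
        + g 2 • phiU (X 0 ^ 2 * X 2 ^ 2)) :=
      Ideal.mem_span_singleton.mp (psiU_IU hmem)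
    have hps : psiU (g 0 • phiU (X 0 ^ 4)
        + g 1 • phiU (X 0 ^ 2 * X 1 ^ 2)
        + g 2 • phiU (X 0 ^ 2 * X 2 ^ 2))
        = Polynomial.C (g 0) + Polynomial.C (g 1) * Polynomial.X ^ 2 := by
      rw [map_add, map_add, map_zsmul, map_zsmul, map_zsmul]
      simp [psiU, phiU, Polynomial.C_eq_intCast, zsmul_eq_mul]
    rw [hps] at hdvd
    have h0 := (Polynomial.X_pow_dvd_iff.mp hdvd) 0 (by norm_num)
    have h2 := (Polynomial.X_pow_dvd_iff.mp hdvd) 2 (by norm_num)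
    simp only [Polynomial.coeff_add, Polynomial.coeff_C, Polynomial.coeff_C_mul,
      Polynomial.coeff_X_pow] at h0 h2
    norm_num at h0 h2
    have hev := evU_IU hmem
    rw [RingHom.mem_ker] at hev
    have hevc : evU (g 0 • phiU (X 0 ^ 4)
        + g 1 • phiU (X 0 ^ 2 * X 1 ^ 2)
        + g 2 • phiU (X 0 ^ 2 * X 2 ^ 2)) = g 0 + g 1 + g 2 := by
      rw [map_add, map_add, map_zsmul, map_zsmul, map_zsmul]
      simp [evU, phiU]
    rw [hevc] at hev
    intro i
    fin_cases i
    · exact h0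
    · exact h2
    · show g 2 = 0
      omega
  · have hz4 : Ideal.Quotient.mk IU (phiU (X 2 ^ 4))
        = Ideal.Quotient.mk IU (phiU (X 0 ^ 2 * X 2 ^ 2)) := (eq2.trans eq3).symm
    rw [eq1, ← eq2, hz4]
    congr 1
    ext w
    simp only [Set.mem_insert_iff, Set.mem_singleton_iff]
    simp only [or_self]


end
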